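/- arXiv:1507.03715 — 2 statements merged into one kernel-verified Lean document; each statement's English description precedes it below -/
import Mathlib

section
/- Let $\Omega = [a_1,b_1] \times [a_2,b_2] \subset \mathbb{R}^2$ be a closed rectangle with $a_1 < b_1$ and $a_2 < b_2$. Let $\mathbf{a}_1, \mathbf{a}_2 : \mathbb{R}^2 \to \mathbb{R}^2$ be continuous on $\Omega$ and differentiable on its interior with integrable partial derivatives. Let $w_1, w_2 : \mathbb{R}^2 \to \mathbb{R}$ be $C^1$ on $\Omega$, twice differentiable on its interior with integrable second partial derivatives, with $w_1 = w_2 = 0$ on $\partial\Omega$. Let $g_1, g_2 : \mathbb{R}^2 \to \mathbb{R}$ be $C^1$ on $\Omega$, twice differentiable on its interior with integrable second partial derivatives, with $g_1 = g_2 = 0$ on $\partial\Omega$, and satisfying $\Delta g_i = \nabla \cdot \mathbf{a}_i$ on the interior of $\Omega$ for $i = 1, 2$. Then $\iint_{\Omega} \big( -\mathbf{a}_1 \cdot \nabla w_1 - \mathbf{a}_2 \cdot \nabla w_2 \big)\, dA = \iint_{\Omega} \big( g_1\, \Delta w_1 + g_2\, \Delta w_2 \big)\, dA$. -/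
open MeasureTheory Set

/-- Partial derivative in the `x` direction of a function on `ℝ × ℝ`. -/
noncomputable def pdx (f : ℝ × ℝ → ℝ) : ℝ × ℝ → ℝ := fun p => fderiv ℝ f p (1, 0)

/-- Partial derivative in the `y` direction of a function on `ℝ × ℝ`. -/
noncomputable def pdy (f : ℝ × ℝ → ℝ) : ℝ × ℝ → ℝ := fun p => fderiv ℝ f p (0, 1)

/-- Laplacian of a function on `ℝ × ℝ`. -/
noncomputable def lap (f : ℝ × ℝ → ℝ) : ℝ × ℝ → ℝ :=
  fun p => pdx (pdx f) p + pdy (pdy f) p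


lemma my_div_zero (a₁ b₁ a₂ b₂ : ℝ) (h₁ : a₁ ≤ b₁) (h₂ : a₂ ≤ b₂)
    (f g : ℝ × ℝ → ℝ) (f' g' : ℝ × ℝ → ℝ × ℝ →L[ℝ] ℝ)
    (Hcf : ContinuousOn f (Icc a₁ b₁ ×ˢ Icc a₂ b₂))
    (Hcg : ContinuousOn g (Icc a₁ b₁ ×ˢ Icc a₂ b₂))
    (Hdf : ∀ p ∈ Ioo a₁ b₁ ×ˢ Ioo a₂ b₂, HasFDerivAt f (f' p) p)
    (Hdg : ∀ p ∈ Ioo a₁ b₁ ×ˢ Ioo a₂ b₂, HasFDerivAt g (g' p) p)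
    (Hi : IntegrableOn (fun p => f' p (1,0) + g' p (0,1)) (Icc a₁ b₁ ×ˢ Icc a₂ b₂))
    (hf0 : ∀ p ∈ frontier (Icc a₁ b₁ ×ˢ Icc a₂ b₂), f p = 0)
    (hg0 : ∀ p ∈ frontier (Icc a₁ b₁ ×ˢ Icc a₂ b₂), g p = 0) :
    ∫ p in Icc a₁ b₁ ×ˢ Icc a₂ b₂, (f' p (1,0) + g' p (0,1)) = 0 := by
  have hfront : frontier (Icc a₁ b₁ ×ˢ Icc a₂ b₂) =
      (Icc a₁ b₁ ×ˢ Icc a₂ b₂) \ (Ioo a₁ b₁ ×ˢ Ioo a₂ b₂) := by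
    rw [((isCompact_Icc.prod isCompact_Icc).isClosed).frontier_eq,
      interior_prod_eq, interior_Icc, interior_Icc]
  have hIcc : Icc ((a₁, a₂) : ℝ × ℝ) (b₁, b₂) = Icc a₁ b₁ ×ˢ Icc a₂ b₂ := Icc_prod_eq _ _
  have key := integral_divergence_prod_Icc_of_hasFDerivAt_off_countable_of_le f g f' g'
    (a₁, a₂) (b₁, b₂) ⟨h₁, h₂⟩ ∅ countable_empty
    (by rw [hIcc]; exact Hcf) (by rw [hIcc]; exact Hcg)
    (fun x hx => Hdf x (by simpa using hx.1)) (fun x hx => Hdg x (by simpa using hx.1))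
    (by rw [hIcc]; exact Hi)
  rw [hIcc] at key
  rw [key]
  have e1 : (∫ x in a₁..b₁, g (x, b₂)) = 0 := by
    rw [intervalIntegral.integral_congr (g := fun _ => (0:ℝ)) (fun x hx => hg0 _ ?_)]
    · simp
    · rw [hfront]
      rw [uIcc_of_le h₁] at hx
      exact ⟨⟨hx, right_mem_Icc.2 h₂⟩, fun hc => absurd hc.2.2 (lt_irrefl _)⟩
  have e2 : (∫ x in a₁..b₁, g (x, a₂)) = 0 := by
    rw [intervalIntegral.integral_congr (g := fun _ => (0:ℝ)) (fun x hx => hg0 _ ?_)]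
    · simp
    · rw [hfront]
      rw [uIcc_of_le h₁] at hx
      exact ⟨⟨hx, left_mem_Icc.2 h₂⟩, fun hc => absurd hc.2.1 (lt_irrefl _)⟩
  have e3 : (∫ y in a₂..b₂, f (b₁, y)) = 0 := by
    rw [intervalIntegral.integral_congr (g := fun _ => (0:ℝ)) (fun y hy => hf0 _ ?_)]
    · simp
    · rw [hfront]
      rw [uIcc_of_le h₂] at hy
      exact ⟨⟨right_mem_Icc.2 h₁, hy⟩, fun hc => absurd hc.1.2 (lt_irrefl _)⟩
  have e4 : (∫ y in a₂..b₂, f (a₁, y)) = 0 := by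
    rw [intervalIntegral.integral_congr (g := fun _ => (0:ℝ)) (fun y hy => hf0 _ ?_)]
    · simp
    · rw [hfront]
      rw [uIcc_of_le h₂] at hy
      exact ⟨⟨left_mem_Icc.2 h₁, hy⟩, fun hc => absurd hc.1.1 (lt_irrefl _)⟩
  rw [e1, e2, e3, e4]; ring




lemma my_ae_eq (a₁ b₁ a₂ b₂ : ℝ) {F G : ℝ × ℝ → ℝ}
    (h : ∀ p ∈ Ioo a₁ b₁ ×ˢ Ioo a₂ b₂, F p = G p) :
    F =ᵐ[volume.restrict (Icc a₁ b₁ ×ˢ Icc a₂ b₂)] G := by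
  have hN : (volume : Measure (ℝ × ℝ))
      ((({a₁, b₁} : Set ℝ) ×ˢ (univ : Set ℝ)) ∪ ((univ : Set ℝ) ×ˢ ({a₂, b₂} : Set ℝ))) = 0 := by
    apply measure_union_null <;>
      · rw [Measure.volume_eq_prod, Measure.prod_prod]
        simp [(Set.toFinite _).measure_zero]
  refine (ae_restrict_iff' (measurableSet_Icc.prod measurableSet_Icc)).2 ?_
  filter_upwards [measure_eq_zero_iff_ae_notMem.1 hN] with p hp hmem
  simp only [mem_union, mem_prod, mem_univ, and_true, true_and, not_or, mem_insert_iff,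
    mem_singleton_iff] at hp
  push_neg at hp
  refine h p ⟨⟨lt_of_le_of_ne hmem.1.1 (Ne.symm hp.1.1), lt_of_le_of_ne hmem.1.2 hp.1.2⟩,
    ⟨lt_of_le_of_ne hmem.2.1 (Ne.symm hp.2.1), lt_of_le_of_ne hmem.2.2 hp.2.2⟩⟩

lemma my_nhds (a₁ b₁ a₂ b₂ : ℝ) {p : ℝ × ℝ} (hp : p ∈ Ioo a₁ b₁ ×ˢ Ioo a₂ b₂) :
    Icc a₁ b₁ ×ˢ Icc a₂ b₂ ∈ nhds p :=
  Filter.mem_of_superset ((isOpen_Ioo.prod isOpen_Ioo).mem_nhds hp)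
    (prod_mono Ioo_subset_Icc_self Ioo_subset_Icc_self)

-- at interior points, fderivWithin equals fderiv
lemma my_fw (a₁ b₁ a₂ b₂ : ℝ) (u : ℝ × ℝ → ℝ) {p : ℝ × ℝ}
    (hp : p ∈ Ioo a₁ b₁ ×ˢ Ioo a₂ b₂) :
    fderivWithin ℝ u (Icc a₁ b₁ ×ˢ Icc a₂ b₂) p = fderiv ℝ u p :=
  fderivWithin_of_mem_nhds (my_nhds a₁ b₁ a₂ b₂ hp)

-- bounded-continuous times integrable
lemma my_bdd_mul (a₁ b₁ a₂ b₂ : ℝ) (c h : ℝ × ℝ → ℝ)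
    (hc : ContinuousOn c (Icc a₁ b₁ ×ˢ Icc a₂ b₂))
    (hh : IntegrableOn h (Icc a₁ b₁ ×ˢ Icc a₂ b₂)) :
    IntegrableOn (fun p => c p * h p) (Icc a₁ b₁ ×ˢ Icc a₂ b₂) := by
  obtain ⟨C, hC⟩ := (isCompact_Icc.prod isCompact_Icc).exists_bound_of_continuousOn hc
  refine Integrable.bdd_mul (c := C) hh
    (hc.aestronglyMeasurable (measurableSet_Icc.prod measurableSet_Icc)) ?_
  exact (ae_restrict_iff' (measurableSet_Icc.prod measurableSet_Icc)).2
    (Filter.Eventually.of_forall fun p hp => hC p hp)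

-- continuity of p ↦ fderivWithin u S p v
lemma my_cont_fw (a₁ b₁ a₂ b₂ : ℝ) (hab₁ : a₁ < b₁) (hab₂ : a₂ < b₂) (u : ℝ × ℝ → ℝ)
    (hu : ContDiffOn ℝ 1 u (Icc a₁ b₁ ×ˢ Icc a₂ b₂)) (v : ℝ × ℝ) :
    ContinuousOn (fun p => fderivWithin ℝ u (Icc a₁ b₁ ×ˢ Icc a₂ b₂) p v)
      (Icc a₁ b₁ ×ˢ Icc a₂ b₂) :=
  (hu.continuousOn_fderivWithin ((uniqueDiffOn_Icc hab₁).prod (uniqueDiffOn_Icc hab₂))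
    le_rfl).clm_apply continuousOn_const

-- integrability of c * pdx u and c * pdy u for C¹ u
lemma my_int_pdx (a₁ b₁ a₂ b₂ : ℝ) (hab₁ : a₁ < b₁) (hab₂ : a₂ < b₂) (c u : ℝ × ℝ → ℝ)
    (hc : ContinuousOn c (Icc a₁ b₁ ×ˢ Icc a₂ b₂))
    (hu : ContDiffOn ℝ 1 u (Icc a₁ b₁ ×ˢ Icc a₂ b₂)) :
    IntegrableOn (fun p => c p * pdx u p) (Icc a₁ b₁ ×ˢ Icc a₂ b₂) := by
  have h1 : IntegrableOn (fun p => c p * fderivWithin ℝ u (Icc a₁ b₁ ×ˢ Icc a₂ b₂) p (1,0))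
      (Icc a₁ b₁ ×ˢ Icc a₂ b₂) :=
    (hc.mul (my_cont_fw a₁ b₁ a₂ b₂ hab₁ hab₂ u hu (1,0))).integrableOn_compact
      (isCompact_Icc.prod isCompact_Icc)
  exact h1.congr (my_ae_eq a₁ b₁ a₂ b₂ fun p hp => by rw [my_fw a₁ b₁ a₂ b₂ u hp]; rfl)

lemma my_int_pdy (a₁ b₁ a₂ b₂ : ℝ) (hab₁ : a₁ < b₁) (hab₂ : a₂ < b₂) (c u : ℝ × ℝ → ℝ)
    (hc : ContinuousOn c (Icc a₁ b₁ ×ˢ Icc a₂ b₂))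
    (hu : ContDiffOn ℝ 1 u (Icc a₁ b₁ ×ˢ Icc a₂ b₂)) :
    IntegrableOn (fun p => c p * pdy u p) (Icc a₁ b₁ ×ˢ Icc a₂ b₂) := by
  have h1 : IntegrableOn (fun p => c p * fderivWithin ℝ u (Icc a₁ b₁ ×ˢ Icc a₂ b₂) p (0,1))
      (Icc a₁ b₁ ×ˢ Icc a₂ b₂) :=
    (hc.mul (my_cont_fw a₁ b₁ a₂ b₂ hab₁ hab₂ u hu (0,1))).integrableOn_compact
      (isCompact_Icc.prod isCompact_Icc)
  exact h1.congr (my_ae_eq a₁ b₁ a₂ b₂ fun p hp => by rw [my_fw a₁ b₁ a₂ b₂ u hp]; rfl)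

-- second derivative of the partial derivative, at interior points
lemma my_pd2 (u : ℝ × ℝ → ℝ) (v : ℝ × ℝ) {p : ℝ × ℝ}
    (hu2 : DifferentiableAt ℝ (fderiv ℝ u) p) :
    HasFDerivAt (fun q => fderiv ℝ u q v)
      ((ContinuousLinearMap.apply ℝ ℝ v).comp (fderiv ℝ (fderiv ℝ u) p)) p := by
  have h := (ContinuousLinearMap.apply ℝ ℝ v).hasFDerivAt.comp p hu2.hasFDerivAt
  exact h

lemma my_green (a₁ b₁ a₂ b₂ : ℝ) (hab₁ : a₁ < b₁) (hab₂ : a₂ < b₂) (w g : ℝ × ℝ → ℝ)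
    (hw : ContDiffOn ℝ 1 w (Icc a₁ b₁ ×ˢ Icc a₂ b₂))
    (hg : ContDiffOn ℝ 1 g (Icc a₁ b₁ ×ˢ Icc a₂ b₂))
    (hwd2 : ∀ p ∈ Ioo a₁ b₁ ×ˢ Ioo a₂ b₂, DifferentiableAt ℝ (fderiv ℝ w) p)
    (hgd2 : ∀ p ∈ Ioo a₁ b₁ ×ˢ Ioo a₂ b₂, DifferentiableAt ℝ (fderiv ℝ g) p)
    (hiwxx : IntegrableOn (pdx (pdx w)) (Icc a₁ b₁ ×ˢ Icc a₂ b₂))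
    (hiwyy : IntegrableOn (pdy (pdy w)) (Icc a₁ b₁ ×ˢ Icc a₂ b₂))
    (higxx : IntegrableOn (pdx (pdx g)) (Icc a₁ b₁ ×ˢ Icc a₂ b₂))
    (higyy : IntegrableOn (pdy (pdy g)) (Icc a₁ b₁ ×ˢ Icc a₂ b₂))
    (hw0 : ∀ p ∈ frontier (Icc a₁ b₁ ×ˢ Icc a₂ b₂), w p = 0)
    (hg0 : ∀ p ∈ frontier (Icc a₁ b₁ ×ˢ Icc a₂ b₂), g p = 0) :
    ∫ p in Icc a₁ b₁ ×ˢ Icc a₂ b₂, (w p * lap g p) =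
      ∫ p in Icc a₁ b₁ ×ˢ Icc a₂ b₂, (g p * lap w p) := by
  have hwd : ∀ p ∈ Ioo a₁ b₁ ×ˢ Ioo a₂ b₂, DifferentiableAt ℝ w p := fun p hp =>
    (hw.differentiableOn one_ne_zero).differentiableAt (my_nhds a₁ b₁ a₂ b₂ hp)
  have hgd : ∀ p ∈ Ioo a₁ b₁ ×ˢ Ioo a₂ b₂, DifferentiableAt ℝ g p := fun p hp =>
    (hg.differentiableOn one_ne_zero).differentiableAt (my_nhds a₁ b₁ a₂ b₂ hp)
  set S := Icc a₁ b₁ ×ˢ Icc a₂ b₂ with hS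
  -- the vector field
  set f : ℝ × ℝ → ℝ := fun p => w p * fderivWithin ℝ g S p (1,0) -
    g p * fderivWithin ℝ w S p (1,0) with hf
  set F : ℝ × ℝ → ℝ := fun p => w p * fderivWithin ℝ g S p (0,1) -
    g p * fderivWithin ℝ w S p (0,1) with hF
  set f' : ℝ × ℝ → ℝ × ℝ →L[ℝ] ℝ := fun p =>
    w p • ((ContinuousLinearMap.apply ℝ ℝ ((1:ℝ),(0:ℝ))).comp (fderiv ℝ (fderiv ℝ g) p)) +
      pdx g p • fderiv ℝ w p -
    (g p • ((ContinuousLinearMap.apply ℝ ℝ ((1:ℝ),(0:ℝ))).comp (fderiv ℝ (fderiv ℝ w) p)) +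
      pdx w p • fderiv ℝ g p) with hf'
  set F' : ℝ × ℝ → ℝ × ℝ →L[ℝ] ℝ := fun p =>
    w p • ((ContinuousLinearMap.apply ℝ ℝ ((0:ℝ),(1:ℝ))).comp (fderiv ℝ (fderiv ℝ g) p)) +
      pdy g p • fderiv ℝ w p -
    (g p • ((ContinuousLinearMap.apply ℝ ℝ ((0:ℝ),(1:ℝ))).comp (fderiv ℝ (fderiv ℝ w) p)) +
      pdy w p • fderiv ℝ g p) with hF'
  -- derivative facts at interior points
  have Hdf : ∀ p ∈ Ioo a₁ b₁ ×ˢ Ioo a₂ b₂, HasFDerivAt f (f' p) p := by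
    intro p hp
    have h1 : HasFDerivAt (fun q => w q * fderiv ℝ g q (1,0))
        (w p • ((ContinuousLinearMap.apply ℝ ℝ ((1:ℝ),(0:ℝ))).comp (fderiv ℝ (fderiv ℝ g) p)) +
          (fderiv ℝ g p (1,0)) • fderiv ℝ w p) p :=
      (hwd p hp).hasFDerivAt.mul (my_pd2 g (1,0) (hgd2 p hp))
    have h2 : HasFDerivAt (fun q => g q * fderiv ℝ w q (1,0))
        (g p • ((ContinuousLinearMap.apply ℝ ℝ ((1:ℝ),(0:ℝ))).comp (fderiv ℝ (fderiv ℝ w) p)) +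
          (fderiv ℝ w p (1,0)) • fderiv ℝ g p) p :=
      (hgd p hp).hasFDerivAt.mul (my_pd2 w (1,0) (hwd2 p hp))
    refine (h1.sub h2).congr_of_eventuallyEq ?_
    filter_upwards [(isOpen_Ioo.prod isOpen_Ioo).mem_nhds hp] with q hq
    rw [hf]
    simp only [Pi.sub_apply, hS, my_fw a₁ b₁ a₂ b₂ g hq, my_fw a₁ b₁ a₂ b₂ w hq]
  have HdF : ∀ p ∈ Ioo a₁ b₁ ×ˢ Ioo a₂ b₂, HasFDerivAt F (F' p) p := by
    intro p hp
    have h1 : HasFDerivAt (fun q => w q * fderiv ℝ g q (0,1))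
        (w p • ((ContinuousLinearMap.apply ℝ ℝ ((0:ℝ),(1:ℝ))).comp (fderiv ℝ (fderiv ℝ g) p)) +
          (fderiv ℝ g p (0,1)) • fderiv ℝ w p) p :=
      (hwd p hp).hasFDerivAt.mul (my_pd2 g (0,1) (hgd2 p hp))
    have h2 : HasFDerivAt (fun q => g q * fderiv ℝ w q (0,1))
        (g p • ((ContinuousLinearMap.apply ℝ ℝ ((0:ℝ),(1:ℝ))).comp (fderiv ℝ (fderiv ℝ w) p)) +
          (fderiv ℝ w p (0,1)) • fderiv ℝ g p) p :=
      (hgd p hp).hasFDerivAt.mul (my_pd2 w (0,1) (hwd2 p hp))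
    refine (h1.sub h2).congr_of_eventuallyEq ?_
    filter_upwards [(isOpen_Ioo.prod isOpen_Ioo).mem_nhds hp] with q hq
    rw [hF]
    simp only [Pi.sub_apply, hS, my_fw a₁ b₁ a₂ b₂ g hq, my_fw a₁ b₁ a₂ b₂ w hq]
  -- key: at interior points, the iterated fderiv applied twice is pdx pdx etc.
  have key : ∀ v : ℝ × ℝ, ∀ u : ℝ × ℝ → ℝ,
      (∀ p ∈ Ioo a₁ b₁ ×ˢ Ioo a₂ b₂, DifferentiableAt ℝ (fderiv ℝ u) p) →
      ∀ p ∈ Ioo a₁ b₁ ×ˢ Ioo a₂ b₂,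
      fderiv ℝ (fderiv ℝ u) p v v = fderiv ℝ (fun q => fderiv ℝ u q v) p v := by
    intro v u hu2 p hp
    rw [(my_pd2 u v (hu2 p hp)).fderiv]
    rfl
  -- the canonical integrand
  set I₀ : ℝ × ℝ → ℝ := fun p => w p * lap g p - g p * lap w p with hI₀
  have hI₀int : IntegrableOn I₀ S :=
    (my_bdd_mul a₁ b₁ a₂ b₂ w _ hw.continuousOn (higxx.add higyy)).sub
      (my_bdd_mul a₁ b₁ a₂ b₂ g _ hg.continuousOn (hiwxx.add hiwyy))
  have hpt : ∀ p ∈ Ioo a₁ b₁ ×ˢ Ioo a₂ b₂, I₀ p = f' p (1,0) + F' p (0,1) := by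
    intro p hp
    have k1 := key (1,0) g hgd2 p hp
    have k2 := key (0,1) g hgd2 p hp
    have k3 := key (1,0) w hwd2 p hp
    have k4 := key (0,1) w hwd2 p hp
    simp only [hf', hF', hI₀, lap]
    delta pdx pdy
    simp only [ContinuousLinearMap.sub_apply,
      ContinuousLinearMap.add_apply, ContinuousLinearMap.coe_smul', Pi.smul_apply,
      smul_eq_mul, ContinuousLinearMap.coe_comp', Function.comp_apply,
      ContinuousLinearMap.apply_apply]
    rw [← k1, ← k2, ← k3, ← k4]
    ring
  have Hi : IntegrableOn (fun p => f' p (1,0) + F' p (0,1)) S :=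
    hI₀int.congr (my_ae_eq a₁ b₁ a₂ b₂ hpt)
  have Hcf : ContinuousOn f S :=
    (hw.continuousOn.mul (my_cont_fw a₁ b₁ a₂ b₂ hab₁ hab₂ g hg (1,0))).sub
      (hg.continuousOn.mul (my_cont_fw a₁ b₁ a₂ b₂ hab₁ hab₂ w hw (1,0)))
  have HcF : ContinuousOn F S :=
    (hw.continuousOn.mul (my_cont_fw a₁ b₁ a₂ b₂ hab₁ hab₂ g hg (0,1))).sub
      (hg.continuousOn.mul (my_cont_fw a₁ b₁ a₂ b₂ hab₁ hab₂ w hw (0,1)))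
  have key2 := my_div_zero a₁ b₁ a₂ b₂ hab₁.le hab₂.le f F f' F' Hcf HcF Hdf HdF Hi
    (fun p hp => by rw [hf]; simp only []; rw [hw0 p hp, hg0 p hp]; ring)
    (fun p hp => by rw [hF]; simp only []; rw [hw0 p hp, hg0 p hp]; ring)
  have key3 : ∫ p in S, I₀ p = 0 := by
    rw [integral_congr_ae (my_ae_eq a₁ b₁ a₂ b₂ hpt)]
    exact key2
  have hwl : IntegrableOn (fun p => w p * lap g p) S :=
    my_bdd_mul a₁ b₁ a₂ b₂ w _ hw.continuousOn (higxx.add higyy)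
  have hgl : IntegrableOn (fun p => g p * lap w p) S :=
    my_bdd_mul a₁ b₁ a₂ b₂ g _ hg.continuousOn (hiwxx.add hiwyy)
  rw [hI₀] at key3
  rw [integral_sub hwl hgl] at key3
  linarith

lemma my_parts (a₁ b₁ a₂ b₂ : ℝ) (hab₁ : a₁ < b₁) (hab₂ : a₂ < b₂) (A₁ A₂ w : ℝ × ℝ → ℝ)
    (hA₁ : ContinuousOn A₁ (Icc a₁ b₁ ×ˢ Icc a₂ b₂))
    (hA₂ : ContinuousOn A₂ (Icc a₁ b₁ ×ˢ Icc a₂ b₂))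
    (hA₁d : ∀ p ∈ Ioo a₁ b₁ ×ˢ Ioo a₂ b₂, DifferentiableAt ℝ A₁ p)
    (hA₂d : ∀ p ∈ Ioo a₁ b₁ ×ˢ Ioo a₂ b₂, DifferentiableAt ℝ A₂ p)
    (hiA₁x : IntegrableOn (pdx A₁) (Icc a₁ b₁ ×ˢ Icc a₂ b₂))
    (hiA₂y : IntegrableOn (pdy A₂) (Icc a₁ b₁ ×ˢ Icc a₂ b₂))
    (hw : ContDiffOn ℝ 1 w (Icc a₁ b₁ ×ˢ Icc a₂ b₂))
    (hw0 : ∀ p ∈ frontier (Icc a₁ b₁ ×ˢ Icc a₂ b₂), w p = 0) :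
    ∫ p in Icc a₁ b₁ ×ˢ Icc a₂ b₂, (A₁ p * pdx w p + A₂ p * pdy w p) =
      -∫ p in Icc a₁ b₁ ×ˢ Icc a₂ b₂, (w p * (pdx A₁ p + pdy A₂ p)) := by
  have hwd : ∀ p ∈ Ioo a₁ b₁ ×ˢ Ioo a₂ b₂, DifferentiableAt ℝ w p := fun p hp =>
    (hw.differentiableOn one_ne_zero).differentiableAt (my_nhds a₁ b₁ a₂ b₂ hp)
  set f' : ℝ × ℝ → ℝ × ℝ →L[ℝ] ℝ :=
    fun p => A₁ p • fderiv ℝ w p + w p • fderiv ℝ A₁ p with hf'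
  set g' : ℝ × ℝ → ℝ × ℝ →L[ℝ] ℝ :=
    fun p => A₂ p • fderiv ℝ w p + w p • fderiv ℝ A₂ p with hg'
  have hpt : ∀ p : ℝ × ℝ, f' p (1,0) + g' p (0,1) =
      (A₁ p * pdx w p + A₂ p * pdy w p) + w p * (pdx A₁ p + pdy A₂ p) := by
    intro p
    simp only [hf', hg', ContinuousLinearMap.add_apply, ContinuousLinearMap.coe_smul',
      Pi.smul_apply, smul_eq_mul, pdx, pdy]
    ring
  have int1 : IntegrableOn (fun p => A₁ p * pdx w p + A₂ p * pdy w p)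
      (Icc a₁ b₁ ×ˢ Icc a₂ b₂) :=
    (my_int_pdx a₁ b₁ a₂ b₂ hab₁ hab₂ A₁ w hA₁ hw).add
      (my_int_pdy a₁ b₁ a₂ b₂ hab₁ hab₂ A₂ w hA₂ hw)
  have int2 : IntegrableOn (fun p => w p * (pdx A₁ p + pdy A₂ p))
      (Icc a₁ b₁ ×ˢ Icc a₂ b₂) :=
    my_bdd_mul a₁ b₁ a₂ b₂ w _ hw.continuousOn (hiA₁x.add hiA₂y)
  have Hi : IntegrableOn (fun p => f' p (1,0) + g' p (0,1)) (Icc a₁ b₁ ×ˢ Icc a₂ b₂) := by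
    have := int1.add int2
    exact this.congr (Filter.EventuallyEq.of_eq (funext fun p => (hpt p).symm))
  have key := my_div_zero a₁ b₁ a₂ b₂ hab₁.le hab₂.le
    (fun p => A₁ p * w p) (fun p => A₂ p * w p) f' g'
    (hA₁.mul hw.continuousOn) (hA₂.mul hw.continuousOn)
    (fun p hp => (hA₁d p hp).hasFDerivAt.mul (hwd p hp).hasFDerivAt)
    (fun p hp => (hA₂d p hp).hasFDerivAt.mul (hwd p hp).hasFDerivAt)
    Hi (fun p hp => by show _ * w p = 0; rw [hw0 p hp, mul_zero]) (fun p hp => by show _ * w p = 0; rw [hw0 p hp, mul_zero])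
  rw [show (fun p => f' p (1,0) + g' p (0,1)) =
      fun p => (A₁ p * pdx w p + A₂ p * pdy w p) + w p * (pdx A₁ p + pdy A₂ p)
    from funext hpt] at key
  rw [integral_add int1 int2] at key
  linarith

/-- **Adjoint (duality) step.** On the closed rectangle `Ω = [a₁,b₁] × [a₂,b₂]`, with vector
fields `aᵢ = (Aᵢ₁, Aᵢ₂)`, functions `wᵢ` vanishing on `∂Ω`, and adjoint variables `gᵢ`
vanishing on `∂Ω` and solving `Δgᵢ = ∇ ⬝ aᵢ` in the interior,
`∬_Ω (-a₁ ⬝ ∇w₁ - a₂ ⬝ ∇w₂) dA = ∬_Ω (g₁ Δw₁ + g₂ Δw₂) dA`. -/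
theorem adjoint_duality_step
    (a₁ b₁ a₂ b₂ : ℝ) (hab₁ : a₁ < b₁) (hab₂ : a₂ < b₂)
    (A₁₁ A₁₂ A₂₁ A₂₂ w₁ w₂ g₁ g₂ : ℝ × ℝ → ℝ)
    (hA₁₁ : ContinuousOn A₁₁ (Icc a₁ b₁ ×ˢ Icc a₂ b₂))
    (hA₁₂ : ContinuousOn A₁₂ (Icc a₁ b₁ ×ˢ Icc a₂ b₂))
    (hA₂₁ : ContinuousOn A₂₁ (Icc a₁ b₁ ×ˢ Icc a₂ b₂))
    (hA₂₂ : ContinuousOn A₂₂ (Icc a₁ b₁ ×ˢ Icc a₂ b₂))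
    (hA₁₁d : ∀ p ∈ interior (Icc a₁ b₁ ×ˢ Icc a₂ b₂), DifferentiableAt ℝ A₁₁ p)
    (hA₁₂d : ∀ p ∈ interior (Icc a₁ b₁ ×ˢ Icc a₂ b₂), DifferentiableAt ℝ A₁₂ p)
    (hA₂₁d : ∀ p ∈ interior (Icc a₁ b₁ ×ˢ Icc a₂ b₂), DifferentiableAt ℝ A₂₁ p)
    (hA₂₂d : ∀ p ∈ interior (Icc a₁ b₁ ×ˢ Icc a₂ b₂), DifferentiableAt ℝ A₂₂ p)
    (hiA₁₁x : IntegrableOn (pdx A₁₁) (Icc a₁ b₁ ×ˢ Icc a₂ b₂))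
    (hiA₁₁y : IntegrableOn (pdy A₁₁) (Icc a₁ b₁ ×ˢ Icc a₂ b₂))
    (hiA₁₂x : IntegrableOn (pdx A₁₂) (Icc a₁ b₁ ×ˢ Icc a₂ b₂))
    (hiA₁₂y : IntegrableOn (pdy A₁₂) (Icc a₁ b₁ ×ˢ Icc a₂ b₂))
    (hiA₂₁x : IntegrableOn (pdx A₂₁) (Icc a₁ b₁ ×ˢ Icc a₂ b₂))
    (hiA₂₁y : IntegrableOn (pdy A₂₁) (Icc a₁ b₁ ×ˢ Icc a₂ b₂))
    (hiA₂₂x : IntegrableOn (pdx A₂₂) (Icc a₁ b₁ ×ˢ Icc a₂ b₂))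
    (hiA₂₂y : IntegrableOn (pdy A₂₂) (Icc a₁ b₁ ×ˢ Icc a₂ b₂))
    (hw₁ : ContDiffOn ℝ 1 w₁ (Icc a₁ b₁ ×ˢ Icc a₂ b₂))
    (hw₂ : ContDiffOn ℝ 1 w₂ (Icc a₁ b₁ ×ˢ Icc a₂ b₂))
    (hw₁d2 : ∀ p ∈ interior (Icc a₁ b₁ ×ˢ Icc a₂ b₂), DifferentiableAt ℝ (fderiv ℝ w₁) p)
    (hw₂d2 : ∀ p ∈ interior (Icc a₁ b₁ ×ˢ Icc a₂ b₂), DifferentiableAt ℝ (fderiv ℝ w₂) p)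
    (hiw₁xx : IntegrableOn (pdx (pdx w₁)) (Icc a₁ b₁ ×ˢ Icc a₂ b₂))
    (hiw₁xy : IntegrableOn (pdy (pdx w₁)) (Icc a₁ b₁ ×ˢ Icc a₂ b₂))
    (hiw₁yx : IntegrableOn (pdx (pdy w₁)) (Icc a₁ b₁ ×ˢ Icc a₂ b₂))
    (hiw₁yy : IntegrableOn (pdy (pdy w₁)) (Icc a₁ b₁ ×ˢ Icc a₂ b₂))
    (hiw₂xx : IntegrableOn (pdx (pdx w₂)) (Icc a₁ b₁ ×ˢ Icc a₂ b₂))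
    (hiw₂xy : IntegrableOn (pdy (pdx w₂)) (Icc a₁ b₁ ×ˢ Icc a₂ b₂))
    (hiw₂yx : IntegrableOn (pdx (pdy w₂)) (Icc a₁ b₁ ×ˢ Icc a₂ b₂))
    (hiw₂yy : IntegrableOn (pdy (pdy w₂)) (Icc a₁ b₁ ×ˢ Icc a₂ b₂))
    (hw₁0 : ∀ p ∈ frontier (Icc a₁ b₁ ×ˢ Icc a₂ b₂), w₁ p = 0)
    (hw₂0 : ∀ p ∈ frontier (Icc a₁ b₁ ×ˢ Icc a₂ b₂), w₂ p = 0)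
    (hg₁ : ContDiffOn ℝ 1 g₁ (Icc a₁ b₁ ×ˢ Icc a₂ b₂))
    (hg₂ : ContDiffOn ℝ 1 g₂ (Icc a₁ b₁ ×ˢ Icc a₂ b₂))
    (hg₁d2 : ∀ p ∈ interior (Icc a₁ b₁ ×ˢ Icc a₂ b₂), DifferentiableAt ℝ (fderiv ℝ g₁) p)
    (hg₂d2 : ∀ p ∈ interior (Icc a₁ b₁ ×ˢ Icc a₂ b₂), DifferentiableAt ℝ (fderiv ℝ g₂) p)
    (hig₁xx : IntegrableOn (pdx (pdx g₁)) (Icc a₁ b₁ ×ˢ Icc a₂ b₂))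
    (hig₁xy : IntegrableOn (pdy (pdx g₁)) (Icc a₁ b₁ ×ˢ Icc a₂ b₂))
    (hig₁yx : IntegrableOn (pdx (pdy g₁)) (Icc a₁ b₁ ×ˢ Icc a₂ b₂))
    (hig₁yy : IntegrableOn (pdy (pdy g₁)) (Icc a₁ b₁ ×ˢ Icc a₂ b₂))
    (hig₂xx : IntegrableOn (pdx (pdx g₂)) (Icc a₁ b₁ ×ˢ Icc a₂ b₂))
    (hig₂xy : IntegrableOn (pdy (pdx g₂)) (Icc a₁ b₁ ×ˢ Icc a₂ b₂))
    (hig₂yx : IntegrableOn (pdx (pdy g₂)) (Icc a₁ b₁ ×ˢ Icc a₂ b₂))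
    (hig₂yy : IntegrableOn (pdy (pdy g₂)) (Icc a₁ b₁ ×ˢ Icc a₂ b₂))
    (hg₁0 : ∀ p ∈ frontier (Icc a₁ b₁ ×ˢ Icc a₂ b₂), g₁ p = 0)
    (hg₂0 : ∀ p ∈ frontier (Icc a₁ b₁ ×ˢ Icc a₂ b₂), g₂ p = 0)
    (hpois₁ : ∀ p ∈ interior (Icc a₁ b₁ ×ˢ Icc a₂ b₂), lap g₁ p = pdx A₁₁ p + pdy A₁₂ p)
    (hpois₂ : ∀ p ∈ interior (Icc a₁ b₁ ×ˢ Icc a₂ b₂), lap g₂ p = pdx A₂₁ p + pdy A₂₂ p) :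
    ∫ p in Icc a₁ b₁ ×ˢ Icc a₂ b₂,
        (-(A₁₁ p * pdx w₁ p + A₁₂ p * pdy w₁ p) - (A₂₁ p * pdx w₂ p + A₂₂ p * pdy w₂ p)) =
      ∫ p in Icc a₁ b₁ ×ˢ Icc a₂ b₂, (g₁ p * lap w₁ p + g₂ p * lap w₂ p) := by
  have hint : interior (Icc a₁ b₁ ×ˢ Icc a₂ b₂) = Ioo a₁ b₁ ×ˢ Ioo a₂ b₂ := by
    rw [interior_prod_eq, interior_Icc, interior_Icc]
  rw [hint] at hA₁₁d hA₁₂d hA₂₁d hA₂₂d hw₁d2 hw₂d2 hg₁d2 hg₂d2 hpois₁ hpois₂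
  have P1 := my_parts a₁ b₁ a₂ b₂ hab₁ hab₂ A₁₁ A₁₂ w₁ hA₁₁ hA₁₂ hA₁₁d hA₁₂d hiA₁₁x hiA₁₂y hw₁ hw₁0
  have P2 := my_parts a₁ b₁ a₂ b₂ hab₁ hab₂ A₂₁ A₂₂ w₂ hA₂₁ hA₂₂ hA₂₁d hA₂₂d hiA₂₁x hiA₂₂y hw₂ hw₂0
  have C1 : ∫ p in Icc a₁ b₁ ×ˢ Icc a₂ b₂, (w₁ p * (pdx A₁₁ p + pdy A₁₂ p)) =
      ∫ p in Icc a₁ b₁ ×ˢ Icc a₂ b₂, (w₁ p * lap g₁ p) :=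
    integral_congr_ae (my_ae_eq a₁ b₁ a₂ b₂ fun p hp => by rw [hpois₁ p hp])
  have C2 : ∫ p in Icc a₁ b₁ ×ˢ Icc a₂ b₂, (w₂ p * (pdx A₂₁ p + pdy A₂₂ p)) =
      ∫ p in Icc a₁ b₁ ×ˢ Icc a₂ b₂, (w₂ p * lap g₂ p) :=
    integral_congr_ae (my_ae_eq a₁ b₁ a₂ b₂ fun p hp => by rw [hpois₂ p hp])
  have G1 := my_green a₁ b₁ a₂ b₂ hab₁ hab₂ w₁ g₁ hw₁ hg₁ hw₁d2 hg₁d2 hiw₁xx hiw₁yy hig₁xx hig₁yy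
    hw₁0 hg₁0
  have G2 := my_green a₁ b₁ a₂ b₂ hab₁ hab₂ w₂ g₂ hw₂ hg₂ hw₂d2 hg₂d2 hiw₂xx hiw₂yy hig₂xx hig₂yy
    hw₂0 hg₂0
  have intT1 : IntegrableOn (fun p => A₁₁ p * pdx w₁ p + A₁₂ p * pdy w₁ p)
      (Icc a₁ b₁ ×ˢ Icc a₂ b₂) :=
    (my_int_pdx a₁ b₁ a₂ b₂ hab₁ hab₂ A₁₁ w₁ hA₁₁ hw₁).add
      (my_int_pdy a₁ b₁ a₂ b₂ hab₁ hab₂ A₁₂ w₁ hA₁₂ hw₁)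
  have intT2 : IntegrableOn (fun p => A₂₁ p * pdx w₂ p + A₂₂ p * pdy w₂ p)
      (Icc a₁ b₁ ×ˢ Icc a₂ b₂) :=
    (my_int_pdx a₁ b₁ a₂ b₂ hab₁ hab₂ A₂₁ w₂ hA₂₁ hw₂).add
      (my_int_pdy a₁ b₁ a₂ b₂ hab₁ hab₂ A₂₂ w₂ hA₂₂ hw₂)
  have intR1 : IntegrableOn (fun p => g₁ p * lap w₁ p) (Icc a₁ b₁ ×ˢ Icc a₂ b₂) :=
    my_bdd_mul a₁ b₁ a₂ b₂ g₁ _ hg₁.continuousOn (hiw₁xx.add hiw₁yy)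
  have intR2 : IntegrableOn (fun p => g₂ p * lap w₂ p) (Icc a₁ b₁ ×ˢ Icc a₂ b₂) :=
    my_bdd_mul a₁ b₁ a₂ b₂ g₂ _ hg₂.continuousOn (hiw₂xx.add hiw₂yy)
  have intT1' : IntegrableOn (fun p => -(A₁₁ p * pdx w₁ p + A₁₂ p * pdy w₁ p))
      (Icc a₁ b₁ ×ˢ Icc a₂ b₂) := intT1.neg
  rw [integral_sub intT1' intT2, integral_neg, integral_add intR1 intR2]
  linarith [P1, P2, C1, C2, G1, G2]
end

section
/- Let $\Omega = [a_1,b_1] \times [a_2,b_2] \subset \mathbb{R}^2$ be a closed rectangle with $a_1 < b_1$ and $a_2 < b_2$, and let $\alpha > 0$. Let $\mathbf{T} = (T_1, T_2) : \mathbb{R}^2 \to \mathbb{R}^2$ be $C^1$ on a neighborhood of $\Omega$, let $f_0, g_0 : \mathbb{R}^2 \to \mathbb{R}$ be continuous on $\Omega$, and set $P = J(\mathbf{T}) - f_0$ and $Q = \alpha(\operatorname{curl}(\mathbf{T}) - g_0)$, where $J(\mathbf{T}) = T_{1x}T_{2y} - T_{1y}T_{2x}$ and $\operatorname{curl}(\mathbf{T})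 = T_{2x} - T_{1y}$. Define $\mathbf{a}_1 = -\big(P\, T_{2y},\; -P\, T_{2x} - Q\big)$ and $\mathbf{a}_2 = -\big(-P\, T_{1y} + Q,\; P\, T_{1x}\big)$, and assume $\mathbf{a}_1, \mathbf{a}_2$ are differentiable on the interior of $\Omega$ with integrable partial derivatives. Let $\mathbf{W} = (W_1, W_2)$, with each $W_i$ $C^1$ on $\Omega$, twice differentiable on the interior with integrable second partials, and $W_i = 0$ on $\partial\Omega$; set $h_i = \Delta W_i$. Let $g_1, g_2 : \mathbb{R}^2 \to \mathbb{R}$ be $C^1$ on $\Omega$, twice differentiable on the interior with integrable second partials, with $g_i = 0$ on $\partial\Omega$ and $\Delta g_i = \nabla \cdot \mathbf{a}_i$ on the interior of $\Omega$ for $i=1,2$. Define $E(t) = \frac{1}{2}\iint_{\Omega}\big[(J(\mathbf{T}+t\mathbf{W})-f_0)^2 + \alpha(\operatorname{curl}(\mathbf{T}+t\mathbf{W})-g_0)^2\big]\,dA$. Then $E$ is differentiable at $t=0$ and $E'(0) = \iint_{\Omega} \big( g_1\, h_1 + g_2\, h_2 \big)\, dA$. -/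
open MeasureTheory Set

/-- Jacobian determinant of the map `S = (S₁, S₂) : ℝ² → ℝ²`:
`J(S) = S₁ₓ S₂_y - S₁_y S₂ₓ`. -/
noncomputable def Jdet (S₁ S₂ : ℝ × ℝ → ℝ) : ℝ × ℝ → ℝ :=
  fun p => pdx S₁ p * pdy S₂ p - pdy S₁ p * pdx S₂ p

/-- 2D scalar curl of the map `S = (S₁, S₂) : ℝ² → ℝ²`: `curl(S) = S₂ₓ - S₁_y`. -/
noncomputable def curl2 (S₁ S₂ : ℝ × ℝ → ℝ) : ℝ × ℝ → ℝ :=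
  fun p => pdx S₂ p - pdy S₁ p

/-- `P = J(T) - f₀`. -/
noncomputable def Pfun (T₁ T₂ f₀ : ℝ × ℝ → ℝ) : ℝ × ℝ → ℝ :=
  fun p => Jdet T₁ T₂ p - f₀ p

/-- `Q = α (curl T - g₀)`. -/
noncomputable def Qfun (α : ℝ) (T₁ T₂ g₀ : ℝ × ℝ → ℝ) : ℝ × ℝ → ℝ :=
  fun p => α * (curl2 T₁ T₂ p - g₀ p)

/-- First component of `a₁ = -(P T₂_y, -P T₂ₓ - Q)`. -/
noncomputable def aa₁₁ (α : ℝ) (T₁ T₂ f₀ g₀ : ℝ × ℝ → ℝ) : ℝ × ℝ → ℝ :=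
  fun p => -(Pfun T₁ T₂ f₀ p * pdy T₂ p)

/-- Second component of `a₁ = -(P T₂_y, -P T₂ₓ - Q)`. -/
noncomputable def aa₁₂ (α : ℝ) (T₁ T₂ f₀ g₀ : ℝ × ℝ → ℝ) : ℝ × ℝ → ℝ :=
  fun p => Pfun T₁ T₂ f₀ p * pdx T₂ p + Qfun α T₁ T₂ g₀ p

/-- First component of `a₂ = -(-P T₁_y + Q, P T₁ₓ)`. -/
noncomputable def aa₂₁ (α : ℝ) (T₁ T₂ f₀ g₀ : ℝ × ℝ → ℝ) : ℝ × ℝ → ℝ :=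
  fun p => Pfun T₁ T₂ f₀ p * pdy T₁ p - Qfun α T₁ T₂ g₀ p

/-- Second component of `a₂ = -(-P T₁_y + Q, P T₁ₓ)`. -/
noncomputable def aa₂₂ (α : ℝ) (T₁ T₂ f₀ g₀ : ℝ × ℝ → ℝ) : ℝ × ℝ → ℝ :=
  fun p => -(Pfun T₁ T₂ f₀ p * pdx T₁ p)

lemma nullFrontier {a₁ b₁ a₂ b₂ : ℝ} (h1 : a₁ ≤ b₁) (h2 : a₂ ≤ b₂) :
    volume (frontier (Icc a₁ b₁ ×ˢ Icc a₂ b₂)) = 0 := by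
  rw [frontier_prod_eq, frontier_Icc h1, frontier_Icc h2]
  refine measure_union_null ?_ ?_ <;>
  · rw [show ((volume : Measure (ℝ × ℝ))) = (volume : Measure ℝ).prod volume from rfl,
      Measure.prod_prod]
    first
      | exact mul_eq_zero.2 (Or.inr ((Set.toFinite _).measure_zero _))
      | exact mul_eq_zero.2 (Or.inl ((Set.toFinite _).measure_zero _))

lemma aeeq_int {a₁ b₁ a₂ b₂ : ℝ} (h1 : a₁ ≤ b₁) (h2 : a₂ ≤ b₂) {f g : ℝ × ℝ → ℝ}
    (h : ∀ p ∈ Ioo a₁ b₁ ×ˢ Ioo a₂ b₂, f p = g p) :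
    f =ᵐ[volume.restrict (Icc a₁ b₁ ×ˢ Icc a₂ b₂)] g := by
  have hm : MeasurableSet (Icc a₁ b₁ ×ˢ Icc a₂ b₂) := measurableSet_Icc.prod measurableSet_Icc
  rw [Filter.EventuallyEq, ae_restrict_iff' hm]
  have hnull : volume ((Icc a₁ b₁ ×ˢ Icc a₂ b₂) \ (Ioo a₁ b₁ ×ˢ Ioo a₂ b₂)) = 0 := by
    refine measure_mono_null ?_ (nullFrontier h1 h2)
    have hi : Ioo a₁ b₁ ×ˢ Ioo a₂ b₂ = interior (Icc a₁ b₁ ×ˢ Icc a₂ b₂) := by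
      rw [interior_prod_eq, interior_Icc, interior_Icc]
    rw [hi]
    exact fun x hx => ⟨subset_closure hx.1, hx.2⟩
  refine measure_mono_null (fun x hx => ?_) hnull
  simp only [mem_setOf_eq] at hx
  rcases not_forall.1 hx with ⟨hxΩ, _⟩
  refine ⟨hxΩ, fun hxi => ?_⟩
  exact hx (fun _ => h x hxi)

section IBP
variable {a₁ b₁ a₂ b₂ : ℝ}

lemma interior_rect : interior (Icc a₁ b₁ ×ˢ Icc a₂ b₂) = Ioo a₁ b₁ ×ˢ Ioo a₂ b₂ := by
  rw [interior_prod_eq, interior_Icc, interior_Icc]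

lemma mem_nhds_of_int {p : ℝ × ℝ} (hp : p ∈ Ioo a₁ b₁ ×ˢ Ioo a₂ b₂) :
    (Icc a₁ b₁ ×ˢ Icc a₂ b₂) ∈ nhds p := by
  rw [← interior_rect] at hp
  exact mem_interior_iff_mem_nhds.1 hp

lemma uDiff (h1 : a₁ < b₁) (h2 : a₂ < b₂) :
    UniqueDiffOn ℝ (Icc a₁ b₁ ×ˢ Icc a₂ b₂) := by
  refine uniqueDiffOn_convex ((convex_Icc a₁ b₁).prod (convex_Icc a₂ b₂)) ?_
  rw [interior_rect]
  exact (nonempty_Ioo.2 h1).prod (nonempty_Ioo.2 h2)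

lemma ibp (h1 : a₁ < b₁) (h2 : a₂ < b₂) {A B W : ℝ × ℝ → ℝ}
    (hAc : ContinuousOn A (Icc a₁ b₁ ×ˢ Icc a₂ b₂))
    (hBc : ContinuousOn B (Icc a₁ b₁ ×ˢ Icc a₂ b₂))
    (hAd : ∀ p ∈ Ioo a₁ b₁ ×ˢ Ioo a₂ b₂, DifferentiableAt ℝ A p)
    (hBd : ∀ p ∈ Ioo a₁ b₁ ×ˢ Ioo a₂ b₂, DifferentiableAt ℝ B p)
    (hiAx : IntegrableOn (pdx A) (Icc a₁ b₁ ×ˢ Icc a₂ b₂))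
    (hiBy : IntegrableOn (pdy B) (Icc a₁ b₁ ×ˢ Icc a₂ b₂))
    (hW : ContDiffOn ℝ 1 W (Icc a₁ b₁ ×ˢ Icc a₂ b₂))
    (hW0 : ∀ p ∈ frontier (Icc a₁ b₁ ×ˢ Icc a₂ b₂), W p = 0) :
    ∫ p in Icc a₁ b₁ ×ˢ Icc a₂ b₂, (A p * pdx W p + B p * pdy W p) =
      - ∫ p in Icc a₁ b₁ ×ˢ Icc a₂ b₂, ((pdx A p + pdy B p) * W p) := by
  set Ω := Icc a₁ b₁ ×ˢ Icc a₂ b₂ with hΩ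
  have hm : MeasurableSet Ω := measurableSet_Icc.prod measurableSet_Icc
  have hcomp : IsCompact Ω := isCompact_Icc.prod isCompact_Icc
  have hud := uDiff h1 h2
  set Wx : ℝ × ℝ → ℝ := fun p => fderivWithin ℝ W Ω p (1, 0) with hWx
  set Wy : ℝ × ℝ → ℝ := fun p => fderivWithin ℝ W Ω p (0, 1) with hWy
  have hWxc : ContinuousOn Wx Ω :=
    ((hW.continuousOn_fderivWithin hud le_rfl).clm_apply continuousOn_const)
  have hWyc : ContinuousOn Wy Ω :=
    ((hW.continuousOn_fderivWithin hud le_rfl).clm_apply continuousOn_const)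
  have hWd : ∀ p ∈ Ioo a₁ b₁ ×ˢ Ioo a₂ b₂, DifferentiableAt ℝ W p := fun p hp =>
    (hW.contDiffAt (mem_nhds_of_int hp)).differentiableAt one_ne_zero
  have hWxeq : ∀ p ∈ Ioo a₁ b₁ ×ˢ Ioo a₂ b₂, Wx p = pdx W p := fun p hp => by
    rw [hWx]; simp only [pdx]
    rw [fderivWithin_of_mem_nhds (mem_nhds_of_int hp)]
  have hWyeq : ∀ p ∈ Ioo a₁ b₁ ×ˢ Ioo a₂ b₂, Wy p = pdy W p := fun p hp => by
    rw [hWy]; simp only [pdy]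
    rw [fderivWithin_of_mem_nhds (mem_nhds_of_int hp)]
  -- boundedness of W
  obtain ⟨C, hC⟩ := hcomp.exists_bound_of_continuousOn hW.continuousOn
  have hWm : AEStronglyMeasurable W (volume.restrict Ω) :=
    hW.continuousOn.aestronglyMeasurable hm
  have hWb : ∀ᵐ p ∂(volume.restrict Ω), ‖W p‖ ≤ C :=
    (ae_restrict_iff' hm).2 (Filter.Eventually.of_forall hC)
  -- the integrable pieces
  have hi1 : IntegrableOn (fun p => W p * pdx A p) Ω := hiAx.bdd_mul hWm hWb
  have hi2 : IntegrableOn (fun p => W p * pdy B p) Ω := hiBy.bdd_mul hWm hWb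
  have hi3 : IntegrableOn (fun p => A p * Wx p) Ω :=
    (hAc.mul hWxc).integrableOn_compact hcomp
  have hi4 : IntegrableOn (fun p => B p * Wy p) Ω :=
    (hBc.mul hWyc).integrableOn_compact hcomp
  -- divergence theorem
  have hfg : ∀ p ∈ Ioo a₁ b₁ ×ˢ Ioo a₂ b₂,
      W p * pdx A p + A p * Wx p + (W p * pdy B p + B p * Wy p) =
        fderiv ℝ (fun q => A q * W q) p (1, 0) + fderiv ℝ (fun q => B q * W q) p (0, 1) := by
    intro p hp
    rw [HasFDerivAt.fderiv (f := fun q => A q * W q) ((hAd p hp).hasFDerivAt.mul (hWd p hp).hasFDerivAt),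
      HasFDerivAt.fderiv (f := fun q => B q * W q) ((hBd p hp).hasFDerivAt.mul (hWd p hp).hasFDerivAt)]
    simp only [ContinuousLinearMap.add_apply, ContinuousLinearMap.smul_apply, smul_eq_mul]
    rw [hWxeq p hp, hWyeq p hp]
    simp only [pdx, pdy]
    ring
  have Hi : IntegrableOn
      (fun p => fderiv ℝ (fun q => A q * W q) p (1, 0) +
        fderiv ℝ (fun q => B q * W q) p (0, 1)) Ω :=
    Integrable.congr ((hi1.add hi3).add (hi2.add hi4)) (aeeq_int h1.le h2.le hfg)
  have hWf0 : ∀ x ∈ Icc a₁ b₁, W (x, b₂) = 0 := by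
    intro x hx
    refine hW0 _ ?_
    rw [hΩ, frontier_prod_eq, frontier_Icc h2.le]
    exact Or.inl ⟨by rw [closure_Icc]; exact hx, Or.inr rfl⟩
  have hWf1 : ∀ x ∈ Icc a₁ b₁, W (x, a₂) = 0 := by
    intro x hx
    refine hW0 _ ?_
    rw [hΩ, frontier_prod_eq, frontier_Icc h2.le]
    exact Or.inl ⟨by rw [closure_Icc]; exact hx, Or.inl rfl⟩
  have hWf2 : ∀ y ∈ Icc a₂ b₂, W (b₁, y) = 0 := by
    intro y hy
    refine hW0 _ ?_
    rw [hΩ, frontier_prod_eq, frontier_Icc h1.le]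
    exact Or.inr ⟨Or.inr rfl, by rw [closure_Icc]; exact hy⟩
  have hWf3 : ∀ y ∈ Icc a₂ b₂, W (a₁, y) = 0 := by
    intro y hy
    refine hW0 _ ?_
    rw [hΩ, frontier_prod_eq, frontier_Icc h1.le]
    exact Or.inr ⟨Or.inl rfl, by rw [closure_Icc]; exact hy⟩
  have key : ∫ p in Ω, (W p * pdx A p + A p * Wx p + (W p * pdy B p + B p * Wy p)) = 0 := by
    have hle : ((a₁, a₂) : ℝ × ℝ) ≤ (b₁, b₂) := ⟨h1.le, h2.le⟩
    have hProd : Ω = Icc ((a₁, a₂) : ℝ × ℝ) (b₁, b₂) := by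
      rw [hΩ, Icc_prod_Icc]
    have hdiv := MeasureTheory.integral_divergence_prod_Icc_of_hasFDerivAt_off_countable_of_le
      (fun q => A q * W q) (fun q => B q * W q)
      (fun p => fderiv ℝ (fun q => A q * W q) p)
      (fun p => fderiv ℝ (fun q => B q * W q) p)
      (a₁, a₂) (b₁, b₂) hle ∅ countable_empty
      (by rw [← hProd]; exact hAc.mul hW.continuousOn)
      (by rw [← hProd]; exact hBc.mul hW.continuousOn)
      (fun x hx => (((hAd x hx.1).mul (hWd x hx.1))).hasFDerivAt)
      (fun x hx => (((hBd x hx.1).mul (hWd x hx.1))).hasFDerivAt)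
      (by rw [← hProd]; exact Hi)
    rw [← hProd] at hdiv
    have hdiv' : ∫ p in Ω, (fderiv ℝ (fun q => A q * W q) p (1, 0) +
        fderiv ℝ (fun q => B q * W q) p (0, 1)) =
        (((∫ x in a₁..b₁, B (x, b₂) * W (x, b₂)) - ∫ x in a₁..b₁, B (x, a₂) * W (x, a₂)) +
          ∫ y in a₂..b₂, A (b₁, y) * W (b₁, y)) - ∫ y in a₂..b₂, A (a₁, y) * W (a₁, y) := hdiv
    rw [integral_congr_ae (aeeq_int h1.le h2.le hfg), hdiv']
    have e1 : (∫ x in a₁..b₁, B (x, b₂) * W (x, b₂)) = 0 := by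
      rw [intervalIntegral.integral_congr (g := fun _ => (0:ℝ))
        (fun x hx => by rw [hWf0 x (by rwa [uIcc_of_le h1.le] at hx), mul_zero])]
      simp
    have e2 : (∫ x in a₁..b₁, B (x, a₂) * W (x, a₂)) = 0 := by
      rw [intervalIntegral.integral_congr (g := fun _ => (0:ℝ))
        (fun x hx => by rw [hWf1 x (by rwa [uIcc_of_le h1.le] at hx), mul_zero])]
      simp
    have e3 : (∫ y in a₂..b₂, A (b₁, y) * W (b₁, y)) = 0 := by
      rw [intervalIntegral.integral_congr (g := fun _ => (0:ℝ))
        (fun y hy => by rw [hWf2 y (by rwa [uIcc_of_le h2.le] at hy), mul_zero])]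
      simp
    have e4 : (∫ y in a₂..b₂, A (a₁, y) * W (a₁, y)) = 0 := by
      rw [intervalIntegral.integral_congr (g := fun _ => (0:ℝ))
        (fun y hy => by rw [hWf3 y (by rwa [uIcc_of_le h2.le] at hy), mul_zero])]
      simp
    rw [e1, e2, e3, e4]
    ring
  have hadd : ∫ p in Ω, ((A p * Wx p + B p * Wy p) + (W p * pdx A p + W p * pdy B p)) =
      (∫ p in Ω, (A p * Wx p + B p * Wy p)) + ∫ p in Ω, (W p * pdx A p + W p * pdy B p) :=
    integral_add (hi3.add hi4) (hi1.add hi2)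
  have key2 : ∫ p in Ω, ((A p * Wx p + B p * Wy p) + (W p * pdx A p + W p * pdy B p)) = 0 := by
    rw [← key]
    exact setIntegral_congr_fun hm (fun p _ => by ring)
  have hneg : (∫ p in Ω, (A p * Wx p + B p * Wy p)) =
      - ∫ p in Ω, (W p * pdx A p + W p * pdy B p) := by
    rw [hadd] at key2; linarith
  have eL : ∫ p in Ω, (A p * pdx W p + B p * pdy W p) =
      ∫ p in Ω, (A p * Wx p + B p * Wy p) :=
    integral_congr_ae (aeeq_int h1.le h2.le (fun p hp => by rw [hWxeq p hp, hWyeq p hp]))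
  have eR : ∫ p in Ω, ((pdx A p + pdy B p) * W p) =
      ∫ p in Ω, (W p * pdx A p + W p * pdy B p) :=
    setIntegral_congr_fun hm (fun p _ => by ring)
  rw [eL, eR, hneg]

end IBP

section Green
variable {a₁ b₁ a₂ b₂ : ℝ}

lemma ioo_open : IsOpen (Ioo a₁ b₁ ×ˢ Ioo a₂ b₂) := isOpen_Ioo.prod isOpen_Ioo

-- differentiability/continuity package for the "within" gradient
lemma gradpack (h1 : a₁ < b₁) (h2 : a₂ < b₂) {g : ℝ × ℝ → ℝ} {v : ℝ × ℝ}
    (hg : ContDiffOn ℝ 1 g (Icc a₁ b₁ ×ˢ Icc a₂ b₂))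
    (hgd2 : ∀ p ∈ Ioo a₁ b₁ ×ˢ Ioo a₂ b₂, DifferentiableAt ℝ (fderiv ℝ g) p) :
    ContinuousOn (fun p => fderivWithin ℝ g (Icc a₁ b₁ ×ˢ Icc a₂ b₂) p v)
      (Icc a₁ b₁ ×ˢ Icc a₂ b₂) ∧
    (∀ p ∈ Ioo a₁ b₁ ×ˢ Ioo a₂ b₂,
      (fun p => fderivWithin ℝ g (Icc a₁ b₁ ×ˢ Icc a₂ b₂) p v) =ᶠ[nhds p]
        (fun p => fderiv ℝ g p v)) ∧
    (∀ p ∈ Ioo a₁ b₁ ×ˢ Ioo a₂ b₂,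
      DifferentiableAt ℝ (fun p => fderivWithin ℝ g (Icc a₁ b₁ ×ˢ Icc a₂ b₂) p v) p) ∧
    (∀ p ∈ Ioo a₁ b₁ ×ˢ Ioo a₂ b₂,
      fderiv ℝ (fun p => fderivWithin ℝ g (Icc a₁ b₁ ×ˢ Icc a₂ b₂) p v) p =
        fderiv ℝ (fun p => fderiv ℝ g p v) p) := by
  have hud := uDiff h1 h2
  have hc : ContinuousOn (fun p => fderivWithin ℝ g (Icc a₁ b₁ ×ˢ Icc a₂ b₂) p v)
      (Icc a₁ b₁ ×ˢ Icc a₂ b₂) :=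
    (hg.continuousOn_fderivWithin hud le_rfl).clm_apply continuousOn_const
  have heq : ∀ p ∈ Ioo a₁ b₁ ×ˢ Ioo a₂ b₂,
      (fun p => fderivWithin ℝ g (Icc a₁ b₁ ×ˢ Icc a₂ b₂) p v) =ᶠ[nhds p]
        (fun p => fderiv ℝ g p v) := by
    intro p hp
    refine Filter.eventuallyEq_of_mem (ioo_open.mem_nhds hp) (fun q hq => ?_)
    rw [fderivWithin_of_mem_nhds (mem_nhds_of_int hq)]
  have hdv : ∀ p ∈ Ioo a₁ b₁ ×ˢ Ioo a₂ b₂,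
      DifferentiableAt ℝ (fun p => fderiv ℝ g p v) p := by
    intro p hp
    exact (ContinuousLinearMap.apply ℝ ℝ v).differentiableAt.comp p (hgd2 p hp)
  refine ⟨hc, heq, fun p hp => ((heq p hp).differentiableAt_iff).2 (hdv p hp),
    fun p hp => (heq p hp).fderiv_eq⟩

lemma green (h1 : a₁ < b₁) (h2 : a₂ < b₂) {g W : ℝ × ℝ → ℝ}
    (hg : ContDiffOn ℝ 1 g (Icc a₁ b₁ ×ˢ Icc a₂ b₂))
    (hgd2 : ∀ p ∈ Ioo a₁ b₁ ×ˢ Ioo a₂ b₂, DifferentiableAt ℝ (fderiv ℝ g) p)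
    (higxx : IntegrableOn (pdx (pdx g)) (Icc a₁ b₁ ×ˢ Icc a₂ b₂))
    (higyy : IntegrableOn (pdy (pdy g)) (Icc a₁ b₁ ×ˢ Icc a₂ b₂))
    (hg0 : ∀ p ∈ frontier (Icc a₁ b₁ ×ˢ Icc a₂ b₂), g p = 0)
    (hW : ContDiffOn ℝ 1 W (Icc a₁ b₁ ×ˢ Icc a₂ b₂))
    (hWd2 : ∀ p ∈ Ioo a₁ b₁ ×ˢ Ioo a₂ b₂, DifferentiableAt ℝ (fderiv ℝ W) p)
    (hiWxx : IntegrableOn (pdx (pdx W)) (Icc a₁ b₁ ×ˢ Icc a₂ b₂))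
    (hiWyy : IntegrableOn (pdy (pdy W)) (Icc a₁ b₁ ×ˢ Icc a₂ b₂))
    (hW0 : ∀ p ∈ frontier (Icc a₁ b₁ ×ˢ Icc a₂ b₂), W p = 0) :
    ∫ p in Icc a₁ b₁ ×ˢ Icc a₂ b₂, (lap g p * W p) =
      ∫ p in Icc a₁ b₁ ×ˢ Icc a₂ b₂, (g p * lap W p) := by
  set Ω := Icc a₁ b₁ ×ˢ Icc a₂ b₂ with hΩ
  have hm : MeasurableSet Ω := measurableSet_Icc.prod measurableSet_Icc
  obtain ⟨hgxc, hgxeq, hgxd, hgxf⟩ := gradpack (v := ((1:ℝ),(0:ℝ))) h1 h2 hg hgd2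
  obtain ⟨hgyc, hgyeq, hgyd, hgyf⟩ := gradpack (v := ((0:ℝ),(1:ℝ))) h1 h2 hg hgd2
  obtain ⟨hWxc, hWxeq, hWxd, hWxf⟩ := gradpack (v := ((1:ℝ),(0:ℝ))) h1 h2 hW hWd2
  obtain ⟨hWyc, hWyeq, hWyd, hWyf⟩ := gradpack (v := ((0:ℝ),(1:ℝ))) h1 h2 hW hWd2
  set Gx : ℝ × ℝ → ℝ := fun p => fderivWithin ℝ g Ω p (1, 0)
  set Gy : ℝ × ℝ → ℝ := fun p => fderivWithin ℝ g Ω p (0, 1)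
  set Vx : ℝ × ℝ → ℝ := fun p => fderivWithin ℝ W Ω p (1, 0)
  set Vy : ℝ × ℝ → ℝ := fun p => fderivWithin ℝ W Ω p (0, 1)
  have hiGx : IntegrableOn (pdx Gx) Ω := by
    refine higxx.congr (aeeq_int h1.le h2.le (fun p hp => ?_))
    show pdx (pdx g) p = pdx Gx p
    simp only [pdx]
    rw [hgxf p hp]
    rfl
  have hiGy : IntegrableOn (pdy Gy) Ω := by
    refine higyy.congr (aeeq_int h1.le h2.le (fun p hp => ?_))
    show pdy (pdy g) p = pdy Gy p
    simp only [pdy]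
    rw [hgyf p hp]
    rfl
  have hiVx : IntegrableOn (pdx Vx) Ω := by
    refine hiWxx.congr (aeeq_int h1.le h2.le (fun p hp => ?_))
    show pdx (pdx W) p = pdx Vx p
    simp only [pdx]
    rw [hWxf p hp]
    rfl
  have hiVy : IntegrableOn (pdy Vy) Ω := by
    refine hiWyy.congr (aeeq_int h1.le h2.le (fun p hp => ?_))
    show pdy (pdy W) p = pdy Vy p
    simp only [pdy]
    rw [hWyf p hp]
    rfl
  have ibp1 := ibp h1 h2 hgxc hgyc hgxd hgyd hiGx hiGy hW hW0
  have ibp2 := ibp h1 h2 hWxc hWyc hWxd hWyd hiVx hiVy hg hg0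
  -- the two LHS are a.e. equal
  have hLHS : ∫ p in Ω, (Gx p * pdx W p + Gy p * pdy W p) =
      ∫ p in Ω, (Vx p * pdx g p + Vy p * pdy g p) := by
    refine integral_congr_ae (aeeq_int h1.le h2.le (fun p hp => ?_))
    have e1 : Gx p = pdx g p := (hgxeq p hp).eq_of_nhds
    have e2 : Gy p = pdy g p := (hgyeq p hp).eq_of_nhds
    have e3 : Vx p = pdx W p := (hWxeq p hp).eq_of_nhds
    have e4 : Vy p = pdy W p := (hWyeq p hp).eq_of_nhds
    rw [e1, e2, e3, e4]; ring
  have hR1 : ∫ p in Ω, ((pdx Gx p + pdy Gy p) * W p) = ∫ p in Ω, (lap g p * W p) := by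
    refine integral_congr_ae (aeeq_int h1.le h2.le (fun p hp => ?_))
    have : pdx Gx p + pdy Gy p = lap g p := by
      simp only [pdx, pdy, lap]
      rw [hgxf p hp, hgyf p hp]
      rfl
    rw [this]
  have hR2 : ∫ p in Ω, ((pdx Vx p + pdy Vy p) * g p) = ∫ p in Ω, (lap W p * g p) := by
    refine integral_congr_ae (aeeq_int h1.le h2.le (fun p hp => ?_))
    have : pdx Vx p + pdy Vy p = lap W p := by
      simp only [pdx, pdy, lap]
      rw [hWxf p hp, hWyf p hp]
      rfl
    rw [this]
  have hgW : ∫ p in Ω, (lap W p * g p) = ∫ p in Ω, (g p * lap W p) :=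
    setIntegral_congr_fun hm (fun p _ => mul_comm _ _)
  rw [← hR1, ← hgW, ← hR2]
  linarith [ibp1, ibp2, hLHS]

end Green

lemma pd_combo {T W : ℝ × ℝ → ℝ} {p : ℝ × ℝ} (v : ℝ × ℝ) (t : ℝ)
    (hT : DifferentiableAt ℝ T p) (hW : DifferentiableAt ℝ W p) :
    fderiv ℝ (fun q => T q + t * W q) p v = fderiv ℝ T p v + t * fderiv ℝ W p v := by
  rw [HasFDerivAt.fderiv (f := fun q => T q + t * W q) (hT.hasFDerivAt.add ((hW.hasFDerivAt).const_mul t))]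
  simp

/-- **The gradient of the `ssd` functional (equation (8) of the paper).**
With `E(t) = ½ ∬_Ω [(J(T + tW) - f₀)² + α (curl(T + tW) - g₀)²] dA` on the closed rectangle
`Ω = [a₁,b₁] × [a₂,b₂]`, with the perturbations `Wᵢ` vanishing on `∂Ω` and `hᵢ = ΔWᵢ`, and with
the adjoint variables `gᵢ` vanishing on `∂Ω` and solving `Δgᵢ = ∇ ⬝ aᵢ` in the interior (for
`a₁, a₂` of equation (6) adjusted for the weight `α`), `E` is differentiable at `t = 0` with
`E'(0) = ∬_Ω (g₁ h₁ + g₂ h₂) dA`. -/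
theorem ssd_gradient
    (a₁ b₁ a₂ b₂ α : ℝ) (hab₁ : a₁ < b₁) (hab₂ : a₂ < b₂) (hα : 0 < α)
    (T₁ T₂ f₀ g₀ W₁ W₂ g₁ g₂ : ℝ × ℝ → ℝ)
    (U : Set (ℝ × ℝ)) (hU : IsOpen U) (hΩU : Icc a₁ b₁ ×ˢ Icc a₂ b₂ ⊆ U)
    (hT₁ : ContDiffOn ℝ 1 T₁ U) (hT₂ : ContDiffOn ℝ 1 T₂ U)
    (hf₀ : ContinuousOn f₀ (Icc a₁ b₁ ×ˢ Icc a₂ b₂))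
    (hg₀ : ContinuousOn g₀ (Icc a₁ b₁ ×ˢ Icc a₂ b₂))
    -- the vector fields `a₁, a₂` are differentiable on the interior of `Ω`
    (hA₁₁d : ∀ p ∈ interior (Icc a₁ b₁ ×ˢ Icc a₂ b₂), DifferentiableAt ℝ (aa₁₁ α T₁ T₂ f₀ g₀) p)
    (hA₁₂d : ∀ p ∈ interior (Icc a₁ b₁ ×ˢ Icc a₂ b₂), DifferentiableAt ℝ (aa₁₂ α T₁ T₂ f₀ g₀) p)
    (hA₂₁d : ∀ p ∈ interior (Icc a₁ b₁ ×ˢ Icc a₂ b₂), DifferentiableAt ℝ (aa₂₁ α T₁ T₂ f₀ g₀) p)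
    (hA₂₂d : ∀ p ∈ interior (Icc a₁ b₁ ×ˢ Icc a₂ b₂), DifferentiableAt ℝ (aa₂₂ α T₁ T₂ f₀ g₀) p)
    -- with integrable partial derivatives
    (hiA₁₁x : IntegrableOn (pdx (aa₁₁ α T₁ T₂ f₀ g₀)) (Icc a₁ b₁ ×ˢ Icc a₂ b₂))
    (hiA₁₁y : IntegrableOn (pdy (aa₁₁ α T₁ T₂ f₀ g₀)) (Icc a₁ b₁ ×ˢ Icc a₂ b₂))
    (hiA₁₂x : IntegrableOn (pdx (aa₁₂ α T₁ T₂ f₀ g₀)) (Icc a₁ b₁ ×ˢ Icc a₂ b₂))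
    (hiA₁₂y : IntegrableOn (pdy (aa₁₂ α T₁ T₂ f₀ g₀)) (Icc a₁ b₁ ×ˢ Icc a₂ b₂))
    (hiA₂₁x : IntegrableOn (pdx (aa₂₁ α T₁ T₂ f₀ g₀)) (Icc a₁ b₁ ×ˢ Icc a₂ b₂))
    (hiA₂₁y : IntegrableOn (pdy (aa₂₁ α T₁ T₂ f₀ g₀)) (Icc a₁ b₁ ×ˢ Icc a₂ b₂))
    (hiA₂₂x : IntegrableOn (pdx (aa₂₂ α T₁ T₂ f₀ g₀)) (Icc a₁ b₁ ×ˢ Icc a₂ b₂))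
    (hiA₂₂y : IntegrableOn (pdy (aa₂₂ α T₁ T₂ f₀ g₀)) (Icc a₁ b₁ ×ˢ Icc a₂ b₂))
    -- the perturbations `W₁, W₂`
    (hW₁ : ContDiffOn ℝ 1 W₁ (Icc a₁ b₁ ×ˢ Icc a₂ b₂))
    (hW₂ : ContDiffOn ℝ 1 W₂ (Icc a₁ b₁ ×ˢ Icc a₂ b₂))
    (hW₁d2 : ∀ p ∈ interior (Icc a₁ b₁ ×ˢ Icc a₂ b₂), DifferentiableAt ℝ (fderiv ℝ W₁) p)
    (hW₂d2 : ∀ p ∈ interior (Icc a₁ b₁ ×ˢ Icc a₂ b₂), DifferentiableAt ℝ (fderiv ℝ W₂) p)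
    (hiW₁xx : IntegrableOn (pdx (pdx W₁)) (Icc a₁ b₁ ×ˢ Icc a₂ b₂))
    (hiW₁xy : IntegrableOn (pdy (pdx W₁)) (Icc a₁ b₁ ×ˢ Icc a₂ b₂))
    (hiW₁yx : IntegrableOn (pdx (pdy W₁)) (Icc a₁ b₁ ×ˢ Icc a₂ b₂))
    (hiW₁yy : IntegrableOn (pdy (pdy W₁)) (Icc a₁ b₁ ×ˢ Icc a₂ b₂))
    (hiW₂xx : IntegrableOn (pdx (pdx W₂)) (Icc a₁ b₁ ×ˢ Icc a₂ b₂))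
    (hiW₂xy : IntegrableOn (pdy (pdx W₂)) (Icc a₁ b₁ ×ˢ Icc a₂ b₂))
    (hiW₂yx : IntegrableOn (pdx (pdy W₂)) (Icc a₁ b₁ ×ˢ Icc a₂ b₂))
    (hiW₂yy : IntegrableOn (pdy (pdy W₂)) (Icc a₁ b₁ ×ˢ Icc a₂ b₂))
    (hW₁0 : ∀ p ∈ frontier (Icc a₁ b₁ ×ˢ Icc a₂ b₂), W₁ p = 0)
    (hW₂0 : ∀ p ∈ frontier (Icc a₁ b₁ ×ˢ Icc a₂ b₂), W₂ p = 0)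
    -- the adjoint variables `g₁, g₂`
    (hg₁ : ContDiffOn ℝ 1 g₁ (Icc a₁ b₁ ×ˢ Icc a₂ b₂))
    (hg₂ : ContDiffOn ℝ 1 g₂ (Icc a₁ b₁ ×ˢ Icc a₂ b₂))
    (hg₁d2 : ∀ p ∈ interior (Icc a₁ b₁ ×ˢ Icc a₂ b₂), DifferentiableAt ℝ (fderiv ℝ g₁) p)
    (hg₂d2 : ∀ p ∈ interior (Icc a₁ b₁ ×ˢ Icc a₂ b₂), DifferentiableAt ℝ (fderiv ℝ g₂) p)
    (hig₁xx : IntegrableOn (pdx (pdx g₁)) (Icc a₁ b₁ ×ˢ Icc a₂ b₂))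
    (hig₁xy : IntegrableOn (pdy (pdx g₁)) (Icc a₁ b₁ ×ˢ Icc a₂ b₂))
    (hig₁yx : IntegrableOn (pdx (pdy g₁)) (Icc a₁ b₁ ×ˢ Icc a₂ b₂))
    (hig₁yy : IntegrableOn (pdy (pdy g₁)) (Icc a₁ b₁ ×ˢ Icc a₂ b₂))
    (hig₂xx : IntegrableOn (pdx (pdx g₂)) (Icc a₁ b₁ ×ˢ Icc a₂ b₂))
    (hig₂xy : IntegrableOn (pdy (pdx g₂)) (Icc a₁ b₁ ×ˢ Icc a₂ b₂))
    (hig₂yx : IntegrableOn (pdx (pdy g₂)) (Icc a₁ b₁ ×ˢ Icc a₂ b₂))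
    (hig₂yy : IntegrableOn (pdy (pdy g₂)) (Icc a₁ b₁ ×ˢ Icc a₂ b₂))
    (hg₁0 : ∀ p ∈ frontier (Icc a₁ b₁ ×ˢ Icc a₂ b₂), g₁ p = 0)
    (hg₂0 : ∀ p ∈ frontier (Icc a₁ b₁ ×ˢ Icc a₂ b₂), g₂ p = 0)
    -- the adjoint Poisson equations `Δgᵢ = ∇ ⬝ aᵢ` in the interior of `Ω`
    (hpois₁ : ∀ p ∈ interior (Icc a₁ b₁ ×ˢ Icc a₂ b₂),
      lap g₁ p = pdx (aa₁₁ α T₁ T₂ f₀ g₀) p + pdy (aa₁₂ α T₁ T₂ f₀ g₀) p)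
    (hpois₂ : ∀ p ∈ interior (Icc a₁ b₁ ×ˢ Icc a₂ b₂),
      lap g₂ p = pdx (aa₂₁ α T₁ T₂ f₀ g₀) p + pdy (aa₂₂ α T₁ T₂ f₀ g₀) p) :
    HasDerivAt
      (fun t : ℝ =>
        (1 / 2) * ∫ p in Icc a₁ b₁ ×ˢ Icc a₂ b₂,
          ((Jdet (fun q => T₁ q + t * W₁ q) (fun q => T₂ q + t * W₂ q) p - f₀ p) ^ 2 +
            α * (curl2 (fun q => T₁ q + t * W₁ q) (fun q => T₂ q + t * W₂ q) p - g₀ p) ^ 2))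
      (∫ p in Icc a₁ b₁ ×ˢ Icc a₂ b₂, (g₁ p * lap W₁ p + g₂ p * lap W₂ p))
      0 := by
  rw [interior_rect] at hA₁₁d hA₁₂d hA₂₁d hA₂₂d hW₁d2 hW₂d2 hg₁d2 hg₂d2 hpois₁ hpois₂
  set Ω := Icc a₁ b₁ ×ˢ Icc a₂ b₂ with hΩdef
  have hm : MeasurableSet Ω := measurableSet_Icc.prod measurableSet_Icc
  have hcomp : IsCompact Ω := isCompact_Icc.prod isCompact_Icc
  -- continuity of the T-derivatives on Ω
  have hTd : ∀ p ∈ Ω, DifferentiableAt ℝ T₁ p ∧ DifferentiableAt ℝ T₂ p := fun p hp =>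
    ⟨(hT₁.contDiffAt (hU.mem_nhds (hΩU hp))).differentiableAt one_ne_zero,
     (hT₂.contDiffAt (hU.mem_nhds (hΩU hp))).differentiableAt one_ne_zero⟩
  have ct1x : ContinuousOn (pdx T₁) Ω :=
    (((hT₁.continuousOn_fderiv_of_isOpen hU le_rfl).clm_apply continuousOn_const).mono hΩU)
  have ct1y : ContinuousOn (pdy T₁) Ω :=
    (((hT₁.continuousOn_fderiv_of_isOpen hU le_rfl).clm_apply continuousOn_const).mono hΩU)
  have ct2x : ContinuousOn (pdx T₂) Ω :=
    (((hT₂.continuousOn_fderiv_of_isOpen hU le_rfl).clm_apply continuousOn_const).mono hΩU)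
  have ct2y : ContinuousOn (pdy T₂) Ω :=
    (((hT₂.continuousOn_fderiv_of_isOpen hU le_rfl).clm_apply continuousOn_const).mono hΩU)
  have cP : ContinuousOn (Pfun T₁ T₂ f₀) Ω := by
    show ContinuousOn (fun p => pdx T₁ p * pdy T₂ p - pdy T₁ p * pdx T₂ p - f₀ p) Ω
    exact ((ct1x.mul ct2y).sub (ct1y.mul ct2x)).sub hf₀
  have cQ : ContinuousOn (Qfun α T₁ T₂ g₀) Ω := by
    show ContinuousOn (fun p => α * (pdx T₂ p - pdy T₁ p - g₀ p)) Ω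
    exact continuousOn_const.mul ((ct2x.sub ct1y).sub hg₀)
  have cA11 : ContinuousOn (aa₁₁ α T₁ T₂ f₀ g₀) Ω := (cP.mul ct2y).neg
  have cA12 : ContinuousOn (aa₁₂ α T₁ T₂ f₀ g₀) Ω := (cP.mul ct2x).add cQ
  have cA21 : ContinuousOn (aa₂₁ α T₁ T₂ f₀ g₀) Ω := (cP.mul ct1y).sub cQ
  have cA22 : ContinuousOn (aa₂₂ α T₁ T₂ f₀ g₀) Ω := (cP.mul ct1x).neg
  -- within-derivatives of W₁, W₂
  obtain ⟨cw1x, ew1x, dw1x, fw1x⟩ := gradpack (v := ((1:ℝ),(0:ℝ))) hab₁ hab₂ hW₁ hW₁d2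
  obtain ⟨cw1y, ew1y, dw1y, fw1y⟩ := gradpack (v := ((0:ℝ),(1:ℝ))) hab₁ hab₂ hW₁ hW₁d2
  obtain ⟨cw2x, ew2x, dw2x, fw2x⟩ := gradpack (v := ((1:ℝ),(0:ℝ))) hab₁ hab₂ hW₂ hW₂d2
  obtain ⟨cw2y, ew2y, dw2y, fw2y⟩ := gradpack (v := ((0:ℝ),(1:ℝ))) hab₁ hab₂ hW₂ hW₂d2
  set w1x : ℝ × ℝ → ℝ := fun p => fderivWithin ℝ W₁ Ω p (1, 0) with hw1x
  set w1y : ℝ × ℝ → ℝ := fun p => fderivWithin ℝ W₁ Ω p (0, 1) with hw1y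
  set w2x : ℝ × ℝ → ℝ := fun p => fderivWithin ℝ W₂ Ω p (1, 0) with hw2x
  set w2y : ℝ × ℝ → ℝ := fun p => fderivWithin ℝ W₂ Ω p (0, 1) with hw2y
  -- coefficient functions of the polynomial in t
  set dJ : ℝ × ℝ → ℝ := fun p =>
    pdx T₁ p * w2y p + w1x p * pdy T₂ p - pdy T₁ p * w2x p - w1y p * pdx T₂ p with hdJ
  set dC : ℝ × ℝ → ℝ := fun p => w2x p - w1y p with hdC
  set KW : ℝ × ℝ → ℝ := fun p => w1x p * w2y p - w1y p * w2x p with hKW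
  set C0 : ℝ × ℝ → ℝ := fun p =>
    Pfun T₁ T₂ f₀ p ^ 2 + α * (curl2 T₁ T₂ p - g₀ p) ^ 2 with hC0
  set C1 : ℝ × ℝ → ℝ := fun p =>
    2 * (Pfun T₁ T₂ f₀ p * dJ p) + 2 * α * ((curl2 T₁ T₂ p - g₀ p) * dC p) with hC1
  set C2 : ℝ × ℝ → ℝ := fun p =>
    dJ p ^ 2 + 2 * (Pfun T₁ T₂ f₀ p * KW p) + α * dC p ^ 2 with hC2
  set C3 : ℝ × ℝ → ℝ := fun p => 2 * (dJ p * KW p) with hC3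
  set C4 : ℝ × ℝ → ℝ := fun p => KW p ^ 2 with hC4
  have ccurl : ContinuousOn (fun p => curl2 T₁ T₂ p - g₀ p) Ω := by
    show ContinuousOn (fun p => pdx T₂ p - pdy T₁ p - g₀ p) Ω
    exact (ct2x.sub ct1y).sub hg₀
  have cdJ : ContinuousOn dJ Ω :=
    (((ct1x.mul cw2y).add (cw1x.mul ct2y)).sub (ct1y.mul cw2x)).sub (cw1y.mul ct2x)
  have cdC : ContinuousOn dC Ω := cw2x.sub cw1y
  have cKW : ContinuousOn KW Ω := (cw1x.mul cw2y).sub (cw1y.mul cw2x)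
  have iC0 : IntegrableOn C0 Ω :=
    ((cP.pow 2).add (continuousOn_const.mul (ccurl.pow 2))).integrableOn_compact hcomp
  have iC1 : IntegrableOn C1 Ω :=
    ((continuousOn_const.mul (cP.mul cdJ)).add
      (continuousOn_const.mul (ccurl.mul cdC))).integrableOn_compact hcomp
  have iC2 : IntegrableOn C2 Ω :=
    (((cdJ.pow 2).add (continuousOn_const.mul (cP.mul cKW))).add
      (continuousOn_const.mul (cdC.pow 2))).integrableOn_compact hcomp
  have iC3 : IntegrableOn C3 Ω :=
    (continuousOn_const.mul (cdJ.mul cKW)).integrableOn_compact hcomp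
  have iC4 : IntegrableOn C4 Ω := (cKW.pow 2).integrableOn_compact hcomp
  set I0 := ∫ p in Ω, C0 p with hI0
  set I1 := ∫ p in Ω, C1 p with hI1
  set I2 := ∫ p in Ω, C2 p with hI2
  set I3 := ∫ p in Ω, C3 p with hI3
  set I4 := ∫ p in Ω, C4 p with hI4
  -- pointwise polynomial identity in the interior
  have hpt : ∀ t : ℝ, ∀ p ∈ Ioo a₁ b₁ ×ˢ Ioo a₂ b₂,
      ((Jdet (fun q => T₁ q + t * W₁ q) (fun q => T₂ q + t * W₂ q) p - f₀ p) ^ 2 +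
        α * (curl2 (fun q => T₁ q + t * W₁ q) (fun q => T₂ q + t * W₂ q) p - g₀ p) ^ 2) =
      C0 p + (t * C1 p + (t ^ 2 * C2 p + (t ^ 3 * C3 p + t ^ 4 * C4 p))) := by
    intro t p hp
    have hpΩ : p ∈ Ω := by
      rw [← interior_rect] at hp; exact interior_subset hp
    have hT1d := (hTd p hpΩ).1
    have hT2d := (hTd p hpΩ).2
    have hW1d : DifferentiableAt ℝ W₁ p :=
      (hW₁.contDiffAt (mem_nhds_of_int hp)).differentiableAt one_ne_zero
    have hW2d : DifferentiableAt ℝ W₂ p :=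
      (hW₂.contDiffAt (mem_nhds_of_int hp)).differentiableAt one_ne_zero
    have e1x : w1x p = pdx W₁ p := (ew1x p hp).eq_of_nhds
    have e1y : w1y p = pdy W₁ p := (ew1y p hp).eq_of_nhds
    have e2x : w2x p = pdx W₂ p := (ew2x p hp).eq_of_nhds
    have e2y : w2y p = pdy W₂ p := (ew2y p hp).eq_of_nhds
    simp only [hC0, hC1, hC2, hC3, hC4, hdJ, hdC, hKW, Jdet, curl2, Pfun, pdx, pdy]
    rw [pd_combo _ t hT1d hW1d, pd_combo _ t hT1d hW1d,
      pd_combo _ t hT2d hW2d, pd_combo _ t hT2d hW2d]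
    simp only [pdx, pdy] at e1x e1y e2x e2y
    rw [← e1x, ← e1y, ← e2x, ← e2y]
    ring
  -- the integral as a polynomial in t
  have hEt : ∀ t : ℝ,
      (∫ p in Ω,
        ((Jdet (fun q => T₁ q + t * W₁ q) (fun q => T₂ q + t * W₂ q) p - f₀ p) ^ 2 +
          α * (curl2 (fun q => T₁ q + t * W₁ q) (fun q => T₂ q + t * W₂ q) p - g₀ p) ^ 2)) =
      I0 + (t * I1 + (t ^ 2 * I2 + (t ^ 3 * I3 + t ^ 4 * I4))) := by
    intro t
    rw [integral_congr_ae (aeeq_int hab₁.le hab₂.le (hpt t))]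
    have j4 : IntegrableOn (fun p => t ^ 3 * C3 p + t ^ 4 * C4 p) Ω :=
      (iC3.const_mul _).add (iC4.const_mul _)
    have j3 : IntegrableOn (fun p => t ^ 2 * C2 p + (t ^ 3 * C3 p + t ^ 4 * C4 p)) Ω :=
      (iC2.const_mul _).add j4
    have j2 : IntegrableOn
        (fun p => t * C1 p + (t ^ 2 * C2 p + (t ^ 3 * C3 p + t ^ 4 * C4 p))) Ω :=
      (iC1.const_mul _).add j3
    rw [integral_add iC0 j2, integral_add (iC1.const_mul t) j3,
      integral_add (iC2.const_mul (t ^ 2)) j4,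
      integral_add (iC3.const_mul (t ^ 3)) (iC4.const_mul (t ^ 4)),
      integral_const_mul t C1, integral_const_mul (t ^ 2) C2,
      integral_const_mul (t ^ 3) C3, integral_const_mul (t ^ 4) C4,
      ← hI0, ← hI1, ← hI2, ← hI3, ← hI4]
  -- identify (1/2) * I1 with the target integral
  set F1 : ℝ × ℝ → ℝ := fun p =>
    aa₁₁ α T₁ T₂ f₀ g₀ p * w1x p + aa₁₂ α T₁ T₂ f₀ g₀ p * w1y p with hF1
  set F2 : ℝ × ℝ → ℝ := fun p =>
    aa₂₁ α T₁ T₂ f₀ g₀ p * w2x p + aa₂₂ α T₁ T₂ f₀ g₀ p * w2y p with hF2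
  have k1 : IntegrableOn F1 Ω := ((cA11.mul cw1x).add (cA12.mul cw1y)).integrableOn_compact hcomp
  have k2 : IntegrableOn F2 Ω := ((cA21.mul cw2x).add (cA22.mul cw2y)).integrableOn_compact hcomp
  -- step A: I1 = 2 * ∫ (P dJ + Q dC)
  have stepA : I1 = 2 * ∫ p in Ω, (Pfun T₁ T₂ f₀ p * dJ p + Qfun α T₁ T₂ g₀ p * dC p) := by
    rw [hI1, setIntegral_congr_fun hm (g := fun p =>
        2 * (Pfun T₁ T₂ f₀ p * dJ p + Qfun α T₁ T₂ g₀ p * dC p))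
      (fun p _ => by simp only [hC1, Qfun]; ring), integral_const_mul]
  -- step B: ∫ (P dJ + Q dC) = -(∫ F1 + ∫ F2)
  have stepB : (∫ p in Ω, (Pfun T₁ T₂ f₀ p * dJ p + Qfun α T₁ T₂ g₀ p * dC p)) =
      -((∫ p in Ω, F1 p) + ∫ p in Ω, F2 p) := by
    rw [setIntegral_congr_fun hm (g := fun p => -(F1 p + F2 p))
      (fun p _ => by
        simp only [hF1, hF2, aa₁₁, aa₁₂, aa₂₁, aa₂₂, hdJ, hdC, Pfun, Qfun, Jdet, curl2]
        ring),
      integral_neg, integral_add k1 k2]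
  -- step C for each component
  have ilap1 : IntegrableOn (fun p => pdx (pdx W₁) p + pdy (pdy W₁) p) Ω := hiW₁xx.add hiW₁yy
  have ilap2 : IntegrableOn (fun p => pdx (pdx W₂) p + pdy (pdy W₂) p) Ω := hiW₂xx.add hiW₂yy
  obtain ⟨B1, hB1⟩ := hcomp.exists_bound_of_continuousOn hg₁.continuousOn
  obtain ⟨B2, hB2⟩ := hcomp.exists_bound_of_continuousOn hg₂.continuousOn
  have ig1 : IntegrableOn (fun p => g₁ p * lap W₁ p) Ω :=
    ilap1.bdd_mul (hg₁.continuousOn.aestronglyMeasurable hm)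
      ((ae_restrict_iff' hm).2 (Filter.Eventually.of_forall hB1))
  have ig2 : IntegrableOn (fun p => g₂ p * lap W₂ p) Ω :=
    ilap2.bdd_mul (hg₂.continuousOn.aestronglyMeasurable hm)
      ((ae_restrict_iff' hm).2 (Filter.Eventually.of_forall hB2))
  have stepC1 : (∫ p in Ω, F1 p) = - ∫ p in Ω, (g₁ p * lap W₁ p) := by
    have e1 : (∫ p in Ω, F1 p) =
        ∫ p in Ω, (aa₁₁ α T₁ T₂ f₀ g₀ p * pdx W₁ p + aa₁₂ α T₁ T₂ f₀ g₀ p * pdy W₁ p) :=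
      integral_congr_ae (aeeq_int hab₁.le hab₂.le (fun p hp => by
        simp only [hF1]
        rw [(ew1x p hp).eq_of_nhds, (ew1y p hp).eq_of_nhds]
        rfl))
    have e2 := ibp hab₁ hab₂ cA11 cA12 hA₁₁d hA₁₂d hiA₁₁x hiA₁₂y hW₁ hW₁0
    have e3 : (∫ p in Ω, ((pdx (aa₁₁ α T₁ T₂ f₀ g₀) p + pdy (aa₁₂ α T₁ T₂ f₀ g₀) p) * W₁ p)) =
        ∫ p in Ω, (lap g₁ p * W₁ p) :=
      integral_congr_ae (aeeq_int hab₁.le hab₂.le (fun p hp => by rw [← hpois₁ p hp]))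
    have e4 := green hab₁ hab₂ hg₁ hg₁d2 hig₁xx hig₁yy hg₁0 hW₁ hW₁d2 hiW₁xx hiW₁yy hW₁0
    rw [e1, e2, e3, e4]
  have stepC2 : (∫ p in Ω, F2 p) = - ∫ p in Ω, (g₂ p * lap W₂ p) := by
    have e1 : (∫ p in Ω, F2 p) =
        ∫ p in Ω, (aa₂₁ α T₁ T₂ f₀ g₀ p * pdx W₂ p + aa₂₂ α T₁ T₂ f₀ g₀ p * pdy W₂ p) :=
      integral_congr_ae (aeeq_int hab₁.le hab₂.le (fun p hp => by
        simp only [hF2]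
        rw [(ew2x p hp).eq_of_nhds, (ew2y p hp).eq_of_nhds]
        rfl))
    have e2 := ibp hab₁ hab₂ cA21 cA22 hA₂₁d hA₂₂d hiA₂₁x hiA₂₂y hW₂ hW₂0
    have e3 : (∫ p in Ω, ((pdx (aa₂₁ α T₁ T₂ f₀ g₀) p + pdy (aa₂₂ α T₁ T₂ f₀ g₀) p) * W₂ p)) =
        ∫ p in Ω, (lap g₂ p * W₂ p) :=
      integral_congr_ae (aeeq_int hab₁.le hab₂.le (fun p hp => by rw [← hpois₂ p hp]))
    have e4 := green hab₁ hab₂ hg₂ hg₂d2 hig₂xx hig₂yy hg₂0 hW₂ hW₂d2 hiW₂xx hiW₂yy hW₂0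
    rw [e1, e2, e3, e4]
  have hkey : (1 / 2) * I1 = ∫ p in Ω, (g₁ p * lap W₁ p + g₂ p * lap W₂ p) := by
    rw [integral_add ig1 ig2, stepA, stepB, stepC1, stepC2]
    ring
  -- assemble the derivative
  have hfun : (fun t : ℝ =>
      (1 / 2) * ∫ p in Ω,
        ((Jdet (fun q => T₁ q + t * W₁ q) (fun q => T₂ q + t * W₂ q) p - f₀ p) ^ 2 +
          α * (curl2 (fun q => T₁ q + t * W₁ q) (fun q => T₂ q + t * W₂ q) p - g₀ p) ^ 2)) =
      fun t => (1 / 2) * (I0 + (t * I1 + (t ^ 2 * I2 + (t ^ 3 * I3 + t ^ 4 * I4)))) := by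
    funext t; rw [hEt t]
  rw [hfun]
  have h1 : HasDerivAt (fun t : ℝ => t * I1) (1 * I1) 0 := (hasDerivAt_id 0).mul_const I1
  have h2 : HasDerivAt (fun t : ℝ => t ^ 2 * I2) (((2 : ℕ) : ℝ) * 0 ^ (2 - 1) * I2) 0 :=
    (hasDerivAt_pow 2 0).mul_const I2
  have h3 : HasDerivAt (fun t : ℝ => t ^ 3 * I3) (((3 : ℕ) : ℝ) * 0 ^ (3 - 1) * I3) 0 :=
    (hasDerivAt_pow 3 0).mul_const I3
  have h4 : HasDerivAt (fun t : ℝ => t ^ 4 * I4) (((4 : ℕ) : ℝ) * 0 ^ (4 - 1) * I4) 0 :=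
    (hasDerivAt_pow 4 0).mul_const I4
  have hsum := ((hasDerivAt_const (0 : ℝ) I0).add (h1.add (h2.add (h3.add h4)))).const_mul
    ((1 : ℝ) / 2)
  have hval : (1 / 2 : ℝ) * (0 + (1 * I1 + (((2 : ℕ) : ℝ) * 0 ^ (2 - 1) * I2 +
      (((3 : ℕ) : ℝ) * 0 ^ (3 - 1) * I3 + ((4 : ℕ) : ℝ) * 0 ^ (4 - 1) * I4)))) =
      ∫ p in Ω, (g₁ p * lap W₁ p + g₂ p * lap W₂ p) := by
    rw [← hkey]
    norm_num
  rw [← hval]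
  exact hsum
end
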